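/- arXiv:2201.08301 — 2 statements merged into one kernel-verified Lean document; each statement's English description precedes it below -/
import Mathlib

section
/- For a natural number n ≥ 1 with n ≠ 2 and y₀ ≠ 0, the function w(t) = (y₀^(n+1)/(2-n))·((1 + 2·t·y₀²)^(1 - n/2) - 1)/(1 + 2·t·y₀²)^(3/2) satisfies w'(t) = -3·y(t)²·w(t) + y(t)^(n+3) with w(0) = 0, where y(t) = y₀/√(1 + 2·t·y₀²), for all t ≥ 0. -/
/-- For n ≥ 1, n ≠ 2, y₀ ≠ 0, the function
w(t) = (y₀^(n+1)/(2-n))·((1 + 2ty₀²)^(1-n/2) - 1)/(1 + 2ty₀²)^(3/2)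
satisfies w' = -3y²w + y^(n+3), w(0) = 0, where y(t) = y₀/√(1 + 2ty₀²), for t ≥ 0. -/
theorem supercritical_pitchfork_sensitivity_alphan (y₀ : ℝ) (hy₀ : y₀ ≠ 0)
    (n : ℕ) (hn : 1 ≤ n) (hn2 : n ≠ 2) :
    (∀ t : ℝ, 0 ≤ t →
      HasDerivAt
        (fun s => y₀ ^ (n + 1) / (2 - (n : ℝ)) *
          ((1 + 2 * s * y₀ ^ 2) ^ ((1 : ℝ) - n / 2) - 1) /
          (1 + 2 * s * y₀ ^ 2) ^ ((3 : ℝ) / 2))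
        (-3 * (y₀ / Real.sqrt (1 + 2 * t * y₀ ^ 2)) ^ 2 *
            (y₀ ^ (n + 1) / (2 - (n : ℝ)) *
              ((1 + 2 * t * y₀ ^ 2) ^ ((1 : ℝ) - n / 2) - 1) /
              (1 + 2 * t * y₀ ^ 2) ^ ((3 : ℝ) / 2)) +
          (y₀ / Real.sqrt (1 + 2 * t * y₀ ^ 2)) ^ (n + 3)) t) ∧
    y₀ ^ (n + 1) / (2 - (n : ℝ)) *
      ((1 + 2 * 0 * y₀ ^ 2) ^ ((1 : ℝ) - n / 2) - 1) /
      (1 + 2 * 0 * y₀ ^ 2) ^ ((3 : ℝ) / 2) = 0 := by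
  constructor
  · intro t ht
    have hA : (0:ℝ) < 1 + 2 * t * y₀ ^ 2 := by positivity
    set A : ℝ := 1 + 2 * t * y₀ ^ 2 with hAdef
    have h2n : (2 : ℝ) - n ≠ 0 := by
      intro h
      apply hn2
      have : (n : ℝ) = 2 := by linarith
      exact_mod_cast this
    have hlin : HasDerivAt (fun s : ℝ => 1 + 2 * s * y₀ ^ 2) (2 * y₀ ^ 2) t := by
      have := ((hasDerivAt_id t).const_mul (2 * y₀ ^ 2)).const_add (1:ℝ)
      simpa [mul_comm, mul_assoc, mul_left_comm] using this
    have hg : HasDerivAt (fun s : ℝ => (1 + 2 * s * y₀ ^ 2) ^ ((1 : ℝ) - n / 2))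
        (2 * y₀ ^ 2 * ((1 : ℝ) - n / 2) * A ^ ((1 : ℝ) - n / 2 - 1)) t :=
      hlin.rpow_const (Or.inl hA.ne')
    have hh : HasDerivAt (fun s : ℝ => (1 + 2 * s * y₀ ^ 2) ^ ((3 : ℝ) / 2))
        (2 * y₀ ^ 2 * ((3 : ℝ) / 2) * A ^ ((3 : ℝ) / 2 - 1)) t :=
      hlin.rpow_const (Or.inl hA.ne')
    have hnum : HasDerivAt
        (fun s : ℝ => y₀ ^ (n + 1) / (2 - (n : ℝ)) * ((1 + 2 * s * y₀ ^ 2) ^ ((1 : ℝ) - n / 2) - 1))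
        (y₀ ^ (n + 1) / (2 - (n : ℝ)) * (2 * y₀ ^ 2 * ((1 : ℝ) - n / 2) * A ^ ((1 : ℝ) - n / 2 - 1))) t :=
      (hg.sub_const 1).const_mul _
    have hhne : A ^ ((3 : ℝ) / 2) ≠ 0 := by positivity
    have hw := hnum.div hh hhne
    convert hw using 1
    case e'_4 => rfl
    case e'_5 => rfl
    case e'_8 => rfl
    -- now pure algebra
    set r : ℝ := Real.sqrt A with hrdef
    have hr : r = A ^ ((1 : ℝ) / 2) := Real.sqrt_eq_rpow A
    have hrpos : 0 < r := Real.sqrt_pos.mpr hA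
    have hr2 : r ^ 2 = A := Real.sq_sqrt hA.le
    have hrn : r ^ n = A ^ ((n : ℝ) / 2) := by
      rw [hr, ← Real.rpow_natCast (A ^ ((1:ℝ)/2)) n, ← Real.rpow_mul hA.le]
      ring_nf
    have E1 : A ^ ((1 : ℝ) - n / 2 - 1) = (r ^ n)⁻¹ := by
      rw [hrn, ← Real.rpow_neg hA.le]
      norm_num
    have E2 : A ^ ((3 : ℝ) / 2 - 1) = r := by
      rw [hr]; norm_num
    have E3 : A ^ ((3 : ℝ) / 2) = r ^ 3 := by
      rw [hr, ← Real.rpow_natCast (A ^ ((1:ℝ)/2)) 3, ← Real.rpow_mul hA.le]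
      norm_num
    have E5 : A ^ ((1 : ℝ) - n / 2) = r ^ 2 / r ^ n := by
      have : (1 : ℝ) - n / 2 = 1 + (-(n / 2)) := by ring
      rw [this, Real.rpow_add hA, Real.rpow_one, Real.rpow_neg hA.le, hrn, ← hr2]
      ring
    rw [E1, E2, E3, E5]
    have hne : r ≠ 0 := hrpos.ne'
    have hrnne : r ^ n ≠ 0 := pow_ne_zero _ hne
    field_simp
    have key : r ^ 5 * r ^ n * r⁻¹ ^ 3 * r⁻¹ ^ n = r ^ 2 := by
      have h1 : r * r⁻¹ = 1 := mul_inv_cancel₀ hne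
      calc _ = r ^ 2 * (r * r⁻¹) ^ 3 * (r * r⁻¹) ^ n := by ring
        _ = r ^ 2 := by rw [h1]; ring
    linear_combination ((2 : ℝ) - n) * y₀ ^ 3 * y₀ ^ n * key
  · norm_num
end

section
/- For y₀ ≠ 0 and any natural n ≥ 1, the supercritical pitchfork sensitivity ∂y/∂αₙ (given by w(t) = y₀³·log(1+2ty₀²)/(2(1+2ty₀²)^(3/2)) for n = 2 and w(t) = (y₀^(n+1)/(2-n))·((1+2ty₀²)^(1-n/2) - 1)/(1+2ty₀²)^(3/2) otherwise) tends to 0 as t → ∞. -/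
open Filter

/-- For y₀ ≠ 0 and n ≥ 1, the supercritical pitchfork sensitivity ∂y/∂αₙ
(the n = 2 log formula, or the general power formula otherwise) tends to 0
as t → ∞: all αₙ are irrelevant directions. -/
theorem supercritical_pitchfork_alphas_irrelevant (y₀ : ℝ) (hy₀ : y₀ ≠ 0)
    (n : ℕ) (hn : 1 ≤ n) :
    Tendsto
      (fun t : ℝ =>
        if n = 2 then
          y₀ ^ 3 * Real.log (1 + 2 * t * y₀ ^ 2) /
            (2 * (1 + 2 * t * y₀ ^ 2) ^ ((3 : ℝ) / 2))
        else
          y₀ ^ (n + 1) / (2 - (n : ℝ)) *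
            ((1 + 2 * t * y₀ ^ 2) ^ ((1 : ℝ) - n / 2) - 1) /
            (1 + 2 * t * y₀ ^ 2) ^ ((3 : ℝ) / 2))
      atTop (nhds 0) := by
  have hy2 : (0:ℝ) < y₀ ^ 2 := by positivity
  have hu : Tendsto (fun t : ℝ => 1 + 2 * t * y₀ ^ 2) atTop atTop := by
    apply tendsto_atTop_add_const_left
    exact (tendsto_id.const_mul_atTop (by norm_num : (0:ℝ) < 2)).atTop_mul_const hy2
  by_cases hn2 : n = 2
  · simp only [if_pos hn2]
    have h1 : Tendsto (fun x : ℝ => Real.log x / x ^ ((3:ℝ)/2)) atTop (nhds 0) :=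
      (isLittleO_log_rpow_atTop (by norm_num)).tendsto_div_nhds_zero
    have h2 : Tendsto (fun x : ℝ => y₀ ^ 3 * Real.log x / (2 * x ^ ((3:ℝ)/2)))
        atTop (nhds 0) := by
      have := h1.const_mul (y₀ ^ 3 / 2)
      rw [mul_zero] at this
      refine this.congr fun x => ?_
      ring
    exact h2.comp hu
  · simp only [if_neg hn2]
    set a : ℝ := (1:ℝ) - n / 2 with ha
    set c : ℝ := y₀ ^ (n + 1) / (2 - (n : ℝ)) with hc
    have hnn : (1:ℝ) ≤ (n:ℝ) := by exact_mod_cast hn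
    have hA : Tendsto (fun x : ℝ => x ^ (a - 3/2)) atTop (nhds 0) := by
      have h : a - 3/2 = -((3:ℝ)/2 - a) := by ring
      rw [h]
      exact tendsto_rpow_neg_atTop (by rw [ha]; linarith)
    have hB : Tendsto (fun x : ℝ => x ^ (-(3:ℝ)/2)) atTop (nhds 0) := by
      have h : -(3:ℝ)/2 = -((3:ℝ)/2) := by ring
      rw [h]
      exact tendsto_rpow_neg_atTop (by norm_num)
    have h2 : Tendsto (fun x : ℝ => c * (x ^ (a - 3/2) - x ^ (-(3:ℝ)/2)))
        atTop (nhds 0) := by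
      have := (hA.sub hB).const_mul c
      simpa using this
    have h3 : Tendsto (fun x : ℝ => c * (x ^ a - 1) / x ^ ((3:ℝ)/2)) atTop (nhds 0) := by
      refine h2.congr' ?_
      filter_upwards [eventually_gt_atTop (0:ℝ)] with x hx
      have hx32 : x ^ ((3:ℝ)/2) ≠ 0 := (Real.rpow_pos_of_pos hx _).ne'
      rw [Real.rpow_sub hx, show -(3:ℝ)/2 = -((3:ℝ)/2) by ring, Real.rpow_neg hx.le]
      field_simp
    exact h3.comp hu
end
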